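/- For a prime power q ≥ 4, let a ∈ F_{q²}* and suppose f(x) = a·x + x^(3q-2) is a bijection of F_{q²}. Then binom(q-1, (2q+1)/3)* · a^(-q(2q+1)/3) + binom(q-1, q/3)* · a^(-q/3) = 0 in F_{q²}, where binom(m,n)* denotes the binomial coefficient when n is a nonnegative integer and 0 when the indicated fraction is not an integer. -/

import Mathlib

open Finset

private lemma sum_pow_all {K : Type*} [Field K] [Fintype K] {e : ℕ} (he : e ≠ 0) :
    ∑ x : K, x ^ e = if (Fintype.card K - 1) ∣ e then (-1 : K) else 0 := by
  classical
  let φ : Kˣ ↪ K := ⟨fun x ↦ x, fun _ _ h => Units.ext h⟩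
  have hφ : ∀ u : Kˣ, φ u = (u : K) := fun _ => rfl
  have hmap : univ.map φ = univ \ {0} := by
    ext x
    simpa only [mem_map, mem_univ, Function.Embedding.coeFn_mk, true_and, mem_sdiff,
      mem_singleton, hφ] using (show (∃ u : Kˣ, (u : K) = x) ↔ ¬x = 0 from
        ⟨fun ⟨u, hu⟩ => hu ▸ u.ne_zero, fun h => ⟨Units.mk0 x h, rfl⟩⟩)
  calc ∑ x : K, x ^ e = ∑ x ∈ univ \ {(0:K)}, x ^ e := by
        rw [← sum_sdiff ({0} : Finset K).subset_univ, sum_singleton, zero_pow he, add_zero]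
    _ = ∑ x : Kˣ, ((x : K) ^ e) := by simp [hφ, ← hmap, univ.sum_map φ]
    _ = _ := FiniteField.sum_pow_units K e

private lemma div_cases {q k : ℕ} (hq : 4 ≤ q) (hk : k < q) (h : (q+1) ∣ (3*k+1)) :
    3*k = q ∨ 3*k = 2*q+1 := by
  obtain ⟨c, hc⟩ := h
  have hc3 : c < 3 := by
    by_contra hc3
    push_neg at hc3
    have : (q+1)*3 ≤ (q+1)*c := Nat.mul_le_mul_left _ hc3
    omega
  interval_cases c <;> omega

theorem alpha_zero_binomial_identity
    (q : ℕ) (hq : IsPrimePow q) (hq4 : 4 ≤ q)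
    (F : Type*) [Field F] [Fintype F] (hF : Fintype.card F = q ^ 2)
    (a : F) (ha : a ≠ 0)
    (hperm : Function.Bijective (fun x : F => a * x + x ^ (3 * q - 2))) :
    (if 3 ∣ 2 * q + 1 then
        (Nat.choose (q - 1) ((2 * q + 1) / 3) : F) * (a ^ (q * (2 * q + 1) / 3))⁻¹
      else 0) +
    (if 3 ∣ q then
        (Nat.choose (q - 1) (q / 3) : F) * (a ^ (q / 3))⁻¹
      else 0) = 0 := by
  classical
  have hq2 : q ^ 2 = q * q := sq q
  -- main power-sum identity
  have hS0 : ∑ x : F, (a * x + x ^ (3 * q - 2)) ^ (q - 1) = 0 := by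
    have h1 := hperm.sum_comp (fun y : F => y ^ (q - 1))
    rw [h1]
    apply FiniteField.sum_pow_lt_card_sub_one
    rw [hF]
    have h2 : q < q * q := by nlinarith
    omega
  have expand : ∀ x : F, (a * x + x ^ (3 * q - 2)) ^ (q - 1)
      = ∑ k ∈ range q, (a ^ (q - 1 - k) * ((q - 1).choose k : F)) * x ^ ((q - 1) * (3 * k + 1)) := by
    intro x
    rw [add_comm, add_pow]
    have hq1 : q - 1 + 1 = q := by omega
    rw [hq1]
    refine Finset.sum_congr rfl fun k hk => ?_
    have hk' : k < q := mem_range.mp hk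
    have hexp : (3 * q - 2) * k + (q - 1 - k) = (q - 1) * (3 * k + 1) := by
      obtain ⟨m, hm⟩ := Nat.exists_eq_add_of_le (show k + 1 ≤ q by omega)
      have e1 : q - 1 - k = m := by omega
      have e2 : 3 * q - 2 = 3 * k + 3 * m + 1 := by omega
      have e3 : q - 1 = k + m := by omega
      rw [e1, e2, e3]; ring
    calc (x ^ (3 * q - 2)) ^ k * (a * x) ^ (q - 1 - k) * ((q - 1).choose k : F)
        = (a ^ (q - 1 - k) * ((q - 1).choose k : F)) * (x ^ ((3 * q - 2) * k) * x ^ (q - 1 - k)) := by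
          rw [mul_pow, ← pow_mul]; ring
      _ = _ := by rw [← pow_add, hexp]
  simp_rw [expand] at hS0
  rw [Finset.sum_comm] at hS0
  simp_rw [← Finset.mul_sum] at hS0
  have hdvd_iff : ∀ k : ℕ, ((Fintype.card F - 1) ∣ (q - 1) * (3 * k + 1)) ↔ ((q + 1) ∣ (3 * k + 1)) := by
    intro k
    rw [hF]
    have h1 : q ^ 2 - 1 = (q - 1) * (q + 1) := by
      have h2 : (q - 1) * (q + 1) + 1 = q ^ 2 := by
        obtain ⟨m, hm⟩ := Nat.exists_eq_add_of_le (show 1 ≤ q by omega)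
        have e1 : q - 1 = m := by omega
        rw [e1, hm]; ring
      omega
    rw [h1]
    exact Nat.mul_dvd_mul_iff_left (show 0 < q - 1 by omega)
  have hS : ∑ k ∈ range q, (a ^ (q - 1 - k) * ((q - 1).choose k : F)) *
      (if (q + 1) ∣ (3 * k + 1) then (-1 : F) else 0) = 0 := by
    have heq : ∀ k ∈ range q, (a ^ (q - 1 - k) * ((q - 1).choose k : F)) *
        (if (q + 1) ∣ (3 * k + 1) then (-1 : F) else 0)
        = (a ^ (q - 1 - k) * ((q - 1).choose k : F)) * ∑ x : F, x ^ ((q - 1) * (3 * k + 1)) := by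
      intro k _
      congr 1
      rw [sum_pow_all (Nat.mul_ne_zero (by omega) (by omega))]
      simp only [hdvd_iff]
    rw [Finset.sum_congr rfl heq]
    exact hS0
  -- case analysis on q mod 3
  have h3 : q % 3 = 0 ∨ q % 3 = 1 ∨ q % 3 = 2 := by omega
  rcases h3 with h0 | h1 | h2
  · -- 3 ∣ q, k₀ = q / 3
    have hk0mem : q / 3 ∈ range q := mem_range.mpr (by omega)
    have hsingle : (∑ k ∈ range q, (a ^ (q - 1 - k) * ((q - 1).choose k : F)) *
        (if (q + 1) ∣ (3 * k + 1) then (-1 : F) else 0))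
        = (a ^ (q - 1 - q / 3) * ((q - 1).choose (q / 3) : F)) *
        (if (q + 1) ∣ (3 * (q / 3) + 1) then (-1 : F) else 0) := by
      refine Finset.sum_eq_single_of_mem _ hk0mem fun b hb hbne => ?_
      rw [if_neg, mul_zero]
      intro hdvd
      have := div_cases hq4 (mem_range.mp hb) hdvd
      omega
    rw [hS] at hsingle
    rw [if_pos (show (q + 1) ∣ (3 * (q / 3) + 1) from ⟨1, by omega⟩)] at hsingle
    have hmulz : a ^ (q - 1 - q / 3) * ((q - 1).choose (q / 3) : F) = 0 := by
      have := hsingle.symm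
      rw [mul_neg_one, neg_eq_zero] at this
      exact this
    have hC : ((q - 1).choose (q / 3) : F) = 0 := by
      rcases mul_eq_zero.mp hmulz with h' | h'
      · exact absurd h' (pow_ne_zero _ ha)
      · exact h'
    rw [if_neg (show ¬ 3 ∣ 2 * q + 1 by omega), if_pos (show 3 ∣ q by omega), hC, zero_mul,
      zero_add]
  · -- 3 ∣ 2q+1, k₀ = (2q+1)/3
    have hk0mem : (2 * q + 1) / 3 ∈ range q := mem_range.mpr (by omega)
    have hsingle : (∑ k ∈ range q, (a ^ (q - 1 - k) * ((q - 1).choose k : F)) *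
        (if (q + 1) ∣ (3 * k + 1) then (-1 : F) else 0))
        = (a ^ (q - 1 - (2 * q + 1) / 3) * ((q - 1).choose ((2 * q + 1) / 3) : F)) *
        (if (q + 1) ∣ (3 * ((2 * q + 1) / 3) + 1) then (-1 : F) else 0) := by
      refine Finset.sum_eq_single_of_mem _ hk0mem fun b hb hbne => ?_
      rw [if_neg, mul_zero]
      intro hdvd
      have := div_cases hq4 (mem_range.mp hb) hdvd
      omega
    rw [hS] at hsingle
    rw [if_pos (show (q + 1) ∣ (3 * ((2 * q + 1) / 3) + 1) from ⟨2, by omega⟩)] at hsingle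
    have hmulz : a ^ (q - 1 - (2 * q + 1) / 3) * ((q - 1).choose ((2 * q + 1) / 3) : F) = 0 := by
      have := hsingle.symm
      rw [mul_neg_one, neg_eq_zero] at this
      exact this
    have hC : ((q - 1).choose ((2 * q + 1) / 3) : F) = 0 := by
      rcases mul_eq_zero.mp hmulz with h' | h'
      · exact absurd h' (pow_ne_zero _ ha)
      · exact h'
    rw [if_pos (show 3 ∣ 2 * q + 1 by omega), if_neg (show ¬ 3 ∣ q by omega), hC, zero_mul,
      add_zero]
  · -- q ≡ 2 mod 3: both conditions fail
    rw [if_neg (show ¬ 3 ∣ 2 * q + 1 by omega), if_neg (show ¬ 3 ∣ q by omega), add_zero]
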